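/- Let ε, ν > 0, μ ∈ ℝ, k_h = (k₁,k₂) ∈ ℤ², and λ ∈ ℂ with Re λ > 0 and λ² ≠ εν|k_h|². Let w = (w₁,w₂) ∈ ℂ² satisfy the system: iμw₁ - λ²w₁ + ε|k_h|²w₁ - w₂ + εν(k₁k₂w₁ - k₁²w₂)/(λ² - εν|k_h|²) = 0 and iμw₂ - λ²w₂ + ε|k_h|²w₂ + w₁ + εν(-k₁k₂w₂ + k₂²w₁)/(λ² - εν|k_h|²) = 0. Define W(t,x_h,z) = (w₁, w₂, (√(εν)/λ) i k_h·w) e^{i k_h·x_h} e^{iμt/ε} e^{-λz/√(εν)}. Then W is divergence free, and there exists p̂ ∈ ℂ such that, with p(t,x_h,z) = p̂ e^{i k_h·x_h} e^{iμt/ε} e^{-λz/√(εν)}, one has ∂_t W + (1/ε) e₃ × W + ∇p - Δ_h W - ν ∂²_{zz} W = 0 on ℝ × ℝ² × ℝ. (The exponential boundary-layer ansatz gives exact solutions of the linearized rotating fluid equations.) -/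

import Mathlib

open Real

/-- The oscillating exponential profile `e^{i k_h·x_h} e^{iμt/ε} e^{-λ z/√(εν)}` of a
boundary layer at the bottom. -/
noncomputable def BLE (ε ν μ : ℝ) (k1 k2 : ℤ) (lam : ℂ) (t x1 x2 z : ℝ) : ℂ :=
  Complex.exp (Complex.I * (((k1 : ℝ) * x1 + (k2 : ℝ) * x2 : ℝ) : ℂ)) *
    Complex.exp (Complex.I * (μ : ℂ) * (t : ℂ) / (ε : ℂ)) *
    Complex.exp (-lam * (z : ℂ) / ((Real.sqrt (ε * ν) : ℝ) : ℂ))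

/-- First component of the boundary-layer profile `W`. -/
noncomputable def Wbl1 (ε ν μ : ℝ) (k1 k2 : ℤ) (lam w1 w2 : ℂ) (t x1 x2 z : ℝ) : ℂ :=
  w1 * BLE ε ν μ k1 k2 lam t x1 x2 z

/-- Second component of the boundary-layer profile `W`. -/
noncomputable def Wbl2 (ε ν μ : ℝ) (k1 k2 : ℤ) (lam w1 w2 : ℂ) (t x1 x2 z : ℝ) : ℂ :=
  w2 * BLE ε ν μ k1 k2 lam t x1 x2 z

/-- Third component of the boundary-layer profile `W`. -/
noncomputable def Wbl3 (ε ν μ : ℝ) (k1 k2 : ℤ) (lam w1 w2 : ℂ) (t x1 x2 z : ℝ) : ℂ :=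
  (((Real.sqrt (ε * ν) : ℝ) : ℂ) / lam) * Complex.I * ((k1 : ℂ) * w1 + (k2 : ℂ) * w2) *
    BLE ε ν μ k1 k2 lam t x1 x2 z

/-- The exponential boundary-layer ansatz gives exact solutions of the linearized rotating
fluid equations: `W` is divergence free, and solves
`∂_t W + (1/ε) e₃ × W + ∇p - Δ_h W - ν ∂²_{zz} W = 0` for a suitable pressure. -/
lemma deriv_mul_cexp (b a : ℂ) (x : ℝ) :
    deriv (fun s : ℝ => b * Complex.exp (a * s)) x = b * a * Complex.exp (a * x) := by
  have h1 : HasDerivAt (fun s : ℝ => a * (s : ℂ)) a x := by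
    simpa using (Complex.ofRealCLM.hasDerivAt (x := x)).const_mul a
  have h : HasDerivAt (fun s : ℝ => b * Complex.exp (a * s))
      (b * (Complex.exp (a * x) * a)) x := h1.cexp.const_mul b
  rw [h.deriv]; ring

lemma deriv2_mul_cexp (b a : ℂ) (x : ℝ) :
    deriv (deriv (fun s : ℝ => b * Complex.exp (a * s))) x
      = b * a ^ 2 * Complex.exp (a * x) := by
  have h : deriv (fun s : ℝ => b * Complex.exp (a * s))
      = fun y : ℝ => (b * a) * Complex.exp (a * y) := funext (deriv_mul_cexp b a)
  rw [h, deriv_mul_cexp]; ring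
lemma BLE_eq (ε ν μ : ℝ) (k1 k2 : ℤ) (lam : ℂ) (t x1 x2 z : ℝ) :
    BLE ε ν μ k1 k2 lam t x1 x2 z =
      Complex.exp ((Complex.I * (k1 : ℂ)) * (x1 : ℂ)) *
      Complex.exp ((Complex.I * (k2 : ℂ)) * (x2 : ℂ)) *
      Complex.exp ((Complex.I * (μ : ℂ) / (ε : ℂ)) * (t : ℂ)) *
      Complex.exp ((-lam / ((Real.sqrt (ε * ν) : ℝ) : ℂ)) * (z : ℂ)) := by
  unfold BLE
  simp only [← Complex.exp_add]
  congr 1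
  push_cast
  ring

variable (ε ν μ : ℝ) (k1 k2 : ℤ) (lam c : ℂ) (t x1 x2 z : ℝ)

lemma deriv_cBLE_x1 :
    deriv (fun s : ℝ => c * BLE ε ν μ k1 k2 lam t s x2 z) x1
      = (Complex.I * (k1 : ℂ)) * (c * BLE ε ν μ k1 k2 lam t x1 x2 z) := by
  have h : (fun s : ℝ => c * BLE ε ν μ k1 k2 lam t s x2 z)
      = fun s : ℝ => (c * (Complex.exp ((Complex.I * (k2:ℂ)) * (x2:ℂ)) *
          Complex.exp ((Complex.I * (μ:ℂ) / (ε:ℂ)) * (t:ℂ)) *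
          Complex.exp ((-lam / ((Real.sqrt (ε*ν) : ℝ):ℂ)) * (z:ℂ)))) *
          Complex.exp ((Complex.I * (k1:ℂ)) * s) := by
    funext s; rw [BLE_eq]; ring
  rw [h, deriv_mul_cexp, BLE_eq]; ring

lemma deriv2_cBLE_x1 :
    deriv (deriv (fun s : ℝ => c * BLE ε ν μ k1 k2 lam t s x2 z)) x1
      = (Complex.I * (k1 : ℂ)) ^ 2 * (c * BLE ε ν μ k1 k2 lam t x1 x2 z) := by
  have h : (fun s : ℝ => c * BLE ε ν μ k1 k2 lam t s x2 z)
      = fun s : ℝ => (c * (Complex.exp ((Complex.I * (k2:ℂ)) * (x2:ℂ)) *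
          Complex.exp ((Complex.I * (μ:ℂ) / (ε:ℂ)) * (t:ℂ)) *
          Complex.exp ((-lam / ((Real.sqrt (ε*ν) : ℝ):ℂ)) * (z:ℂ)))) *
          Complex.exp ((Complex.I * (k1:ℂ)) * s) := by
    funext s; rw [BLE_eq]; ring
  rw [h, deriv2_mul_cexp, BLE_eq]; ring

lemma deriv_cBLE_x2 :
    deriv (fun s : ℝ => c * BLE ε ν μ k1 k2 lam t x1 s z) x2
      = (Complex.I * (k2 : ℂ)) * (c * BLE ε ν μ k1 k2 lam t x1 x2 z) := by
  have h : (fun s : ℝ => c * BLE ε ν μ k1 k2 lam t x1 s z)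
      = fun s : ℝ => (c * (Complex.exp ((Complex.I * (k1:ℂ)) * (x1:ℂ)) *
          Complex.exp ((Complex.I * (μ:ℂ) / (ε:ℂ)) * (t:ℂ)) *
          Complex.exp ((-lam / ((Real.sqrt (ε*ν) : ℝ):ℂ)) * (z:ℂ)))) *
          Complex.exp ((Complex.I * (k2:ℂ)) * s) := by
    funext s; rw [BLE_eq]; ring
  rw [h, deriv_mul_cexp, BLE_eq]; ring

lemma deriv2_cBLE_x2 :
    deriv (deriv (fun s : ℝ => c * BLE ε ν μ k1 k2 lam t x1 s z)) x2
      = (Complex.I * (k2 : ℂ)) ^ 2 * (c * BLE ε ν μ k1 k2 lam t x1 x2 z) := by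
  have h : (fun s : ℝ => c * BLE ε ν μ k1 k2 lam t x1 s z)
      = fun s : ℝ => (c * (Complex.exp ((Complex.I * (k1:ℂ)) * (x1:ℂ)) *
          Complex.exp ((Complex.I * (μ:ℂ) / (ε:ℂ)) * (t:ℂ)) *
          Complex.exp ((-lam / ((Real.sqrt (ε*ν) : ℝ):ℂ)) * (z:ℂ)))) *
          Complex.exp ((Complex.I * (k2:ℂ)) * s) := by
    funext s; rw [BLE_eq]; ring
  rw [h, deriv2_mul_cexp, BLE_eq]; ring

lemma deriv_cBLE_t :
    deriv (fun s : ℝ => c * BLE ε ν μ k1 k2 lam s x1 x2 z) t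
      = (Complex.I * (μ : ℂ) / (ε : ℂ)) * (c * BLE ε ν μ k1 k2 lam t x1 x2 z) := by
  have h : (fun s : ℝ => c * BLE ε ν μ k1 k2 lam s x1 x2 z)
      = fun s : ℝ => (c * (Complex.exp ((Complex.I * (k1:ℂ)) * (x1:ℂ)) *
          Complex.exp ((Complex.I * (k2:ℂ)) * (x2:ℂ)) *
          Complex.exp ((-lam / ((Real.sqrt (ε*ν) : ℝ):ℂ)) * (z:ℂ)))) *
          Complex.exp ((Complex.I * (μ:ℂ) / (ε:ℂ)) * s) := by
    funext s; rw [BLE_eq]; ring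
  rw [h, deriv_mul_cexp, BLE_eq]; ring

lemma deriv_cBLE_z :
    deriv (fun s : ℝ => c * BLE ε ν μ k1 k2 lam t x1 x2 s) z
      = (-lam / ((Real.sqrt (ε*ν) : ℝ):ℂ)) * (c * BLE ε ν μ k1 k2 lam t x1 x2 z) := by
  have h : (fun s : ℝ => c * BLE ε ν μ k1 k2 lam t x1 x2 s)
      = fun s : ℝ => (c * (Complex.exp ((Complex.I * (k1:ℂ)) * (x1:ℂ)) *
          Complex.exp ((Complex.I * (k2:ℂ)) * (x2:ℂ)) *
          Complex.exp ((Complex.I * (μ:ℂ) / (ε:ℂ)) * (t:ℂ)))) *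
          Complex.exp ((-lam / ((Real.sqrt (ε*ν) : ℝ):ℂ)) * s) := by
    funext s; rw [BLE_eq]; ring
  rw [h, deriv_mul_cexp, BLE_eq]; ring

lemma deriv2_cBLE_z :
    deriv (deriv (fun s : ℝ => c * BLE ε ν μ k1 k2 lam t x1 x2 s)) z
      = (-lam / ((Real.sqrt (ε*ν) : ℝ):ℂ)) ^ 2 * (c * BLE ε ν μ k1 k2 lam t x1 x2 z) := by
  have h : (fun s : ℝ => c * BLE ε ν μ k1 k2 lam t x1 x2 s)
      = fun s : ℝ => (c * (Complex.exp ((Complex.I * (k1:ℂ)) * (x1:ℂ)) *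
          Complex.exp ((Complex.I * (k2:ℂ)) * (x2:ℂ)) *
          Complex.exp ((Complex.I * (μ:ℂ) / (ε:ℂ)) * (t:ℂ)))) *
          Complex.exp ((-lam / ((Real.sqrt (ε*ν) : ℝ):ℂ)) * s) := by
    funext s; rw [BLE_eq]; ring
  rw [h, deriv2_mul_cexp, BLE_eq]; ring

theorem boundary_layer_exact_solution
    (ε ν μ : ℝ) (hε : 0 < ε) (hν : 0 < ν) (k1 k2 : ℤ) (lam : ℂ)
    (hlam : 0 < lam.re)
    (hlam2 : lam ^ 2 ≠ ((ε * ν : ℝ) : ℂ) * ((k1 : ℂ) ^ 2 + (k2 : ℂ) ^ 2))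
    (w1 w2 : ℂ)
    (hw1 : Complex.I * (μ : ℂ) * w1 - lam ^ 2 * w1 +
        (ε : ℂ) * ((k1 : ℂ) ^ 2 + (k2 : ℂ) ^ 2) * w1 - w2 +
        ((ε * ν : ℝ) : ℂ) * ((k1 : ℂ) * (k2 : ℂ) * w1 - (k1 : ℂ) ^ 2 * w2) /
          (lam ^ 2 - ((ε * ν : ℝ) : ℂ) * ((k1 : ℂ) ^ 2 + (k2 : ℂ) ^ 2)) = 0)
    (hw2 : Complex.I * (μ : ℂ) * w2 - lam ^ 2 * w2 +
        (ε : ℂ) * ((k1 : ℂ) ^ 2 + (k2 : ℂ) ^ 2) * w2 + w1 +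
        ((ε * ν : ℝ) : ℂ) * (-((k1 : ℂ) * (k2 : ℂ)) * w2 + (k2 : ℂ) ^ 2 * w1) /
          (lam ^ 2 - ((ε * ν : ℝ) : ℂ) * ((k1 : ℂ) ^ 2 + (k2 : ℂ) ^ 2)) = 0) :
    (∀ t x1 x2 z : ℝ,
      deriv (fun s => Wbl1 ε ν μ k1 k2 lam w1 w2 t s x2 z) x1 +
        deriv (fun s => Wbl2 ε ν μ k1 k2 lam w1 w2 t x1 s z) x2 +
        deriv (fun s => Wbl3 ε ν μ k1 k2 lam w1 w2 t x1 x2 s) z = 0) ∧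
    (∃ ph : ℂ, ∀ t x1 x2 z : ℝ,
      (deriv (fun s => Wbl1 ε ν μ k1 k2 lam w1 w2 s x1 x2 z) t +
          ((1 / ε : ℝ) : ℂ) * (-(Wbl2 ε ν μ k1 k2 lam w1 w2 t x1 x2 z)) +
          deriv (fun s => ph * BLE ε ν μ k1 k2 lam t s x2 z) x1 -
          (deriv (deriv (fun s => Wbl1 ε ν μ k1 k2 lam w1 w2 t s x2 z)) x1 +
            deriv (deriv (fun s => Wbl1 ε ν μ k1 k2 lam w1 w2 t x1 s z)) x2) -
          (ν : ℂ) * deriv (deriv (fun s => Wbl1 ε ν μ k1 k2 lam w1 w2 t x1 x2 s)) z = 0) ∧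
      (deriv (fun s => Wbl2 ε ν μ k1 k2 lam w1 w2 s x1 x2 z) t +
          ((1 / ε : ℝ) : ℂ) * (Wbl1 ε ν μ k1 k2 lam w1 w2 t x1 x2 z) +
          deriv (fun s => ph * BLE ε ν μ k1 k2 lam t x1 s z) x2 -
          (deriv (deriv (fun s => Wbl2 ε ν μ k1 k2 lam w1 w2 t s x2 z)) x1 +
            deriv (deriv (fun s => Wbl2 ε ν μ k1 k2 lam w1 w2 t x1 s z)) x2) -
          (ν : ℂ) * deriv (deriv (fun s => Wbl2 ε ν μ k1 k2 lam w1 w2 t x1 x2 s)) z = 0) ∧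
      (deriv (fun s => Wbl3 ε ν μ k1 k2 lam w1 w2 s x1 x2 z) t +
          deriv (fun s => ph * BLE ε ν μ k1 k2 lam t x1 x2 s) z -
          (deriv (deriv (fun s => Wbl3 ε ν μ k1 k2 lam w1 w2 t s x2 z)) x1 +
            deriv (deriv (fun s => Wbl3 ε ν μ k1 k2 lam w1 w2 t x1 s z)) x2) -
          (ν : ℂ) * deriv (deriv (fun s => Wbl3 ε ν μ k1 k2 lam w1 w2 t x1 x2 s)) z = 0)) := by
  have hε' : (ε : ℂ) ≠ 0 := by exact_mod_cast hε.ne'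
  have hν' : (ν : ℂ) ≠ 0 := by exact_mod_cast hν.ne'
  have hσpos : 0 < Real.sqrt (ε * ν) := Real.sqrt_pos.mpr (mul_pos hε hν)
  have hσ : ((Real.sqrt (ε * ν) : ℝ) : ℂ) ≠ 0 := by exact_mod_cast hσpos.ne'
  have hσ2 : ((Real.sqrt (ε * ν) : ℝ) : ℂ) ^ 2 = ((ε * ν : ℝ) : ℂ) := by
    rw [← Complex.ofReal_pow, Real.sq_sqrt (mul_pos hε hν).le]
  have hlam0 : lam ≠ 0 := by
    intro h; rw [h] at hlam; simp at hlam
  have hD : lam ^ 2 - ((ε * ν : ℝ) : ℂ) * ((k1 : ℂ) ^ 2 + (k2 : ℂ) ^ 2) ≠ 0 :=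
    sub_ne_zero.mpr hlam2
  have hA1 : ((ε * ν : ℝ) : ℂ) * ((k1 : ℂ) * (k2 : ℂ) * w1 - (k1 : ℂ) ^ 2 * w2) /
          (lam ^ 2 - ((ε * ν : ℝ) : ℂ) * ((k1 : ℂ) ^ 2 + (k2 : ℂ) ^ 2))
      = -(Complex.I * (μ : ℂ) * w1 - lam ^ 2 * w1 +
          (ε : ℂ) * ((k1 : ℂ) ^ 2 + (k2 : ℂ) ^ 2) * w1 - w2) := by
    linear_combination hw1
  have hA2 : ((ε * ν : ℝ) : ℂ) * (-((k1 : ℂ) * (k2 : ℂ)) * w2 + (k2 : ℂ) ^ 2 * w1) /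
          (lam ^ 2 - ((ε * ν : ℝ) : ℂ) * ((k1 : ℂ) ^ 2 + (k2 : ℂ) ^ 2))
      = -(Complex.I * (μ : ℂ) * w2 - lam ^ 2 * w2 +
          (ε : ℂ) * ((k1 : ℂ) ^ 2 + (k2 : ℂ) ^ 2) * w2 + w1) := by
    linear_combination hw2
  rw [div_eq_iff hD] at hA1 hA2
  set ph : ℂ := -Complex.I * (ν : ℂ) * ((k2 : ℂ) * w1 - (k1 : ℂ) * w2) /
      (lam ^ 2 - ((ε * ν : ℝ) : ℂ) * ((k1 : ℂ) ^ 2 + (k2 : ℂ) ^ 2)) with hph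
  constructor
  · intro t x1 x2 z
    simp only [Wbl1, Wbl2, Wbl3]
    rw [deriv_cBLE_x1, deriv_cBLE_x2, deriv_cBLE_z]
    have key : (Complex.I * (k1 : ℂ)) * w1 + (Complex.I * (k2 : ℂ)) * w2 +
        (-lam / ((Real.sqrt (ε*ν) : ℝ):ℂ)) *
          ((((Real.sqrt (ε * ν) : ℝ) : ℂ) / lam) * Complex.I *
            ((k1 : ℂ) * w1 + (k2 : ℂ) * w2)) = 0 := by
      have h1 : (-lam / ((Real.sqrt (ε*ν) : ℝ):ℂ)) * (((Real.sqrt (ε*ν) : ℝ):ℂ) / lam) = -1 := by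
        rw [div_mul_div_comm, neg_mul, mul_comm lam, neg_div,
          div_self (mul_ne_zero hσ hlam0)]
      linear_combination (Complex.I * ((k1:ℂ)*w1+(k2:ℂ)*w2)) * h1
    linear_combination (BLE ε ν μ k1 k2 lam t x1 x2 z) * key
  · refine ⟨ph, fun t x1 x2 z => ⟨?_, ?_, ?_⟩⟩
    · simp only [Wbl1, Wbl2]
      rw [deriv_cBLE_t, deriv_cBLE_x1, deriv2_cBLE_x1, deriv2_cBLE_x2, deriv2_cBLE_z]
      have key : (Complex.I * (μ:ℂ) / (ε:ℂ)) * w1 + ((1 / ε : ℝ) : ℂ) * (-w2) +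
          (Complex.I * (k1:ℂ)) * ph -
          ((Complex.I * (k1:ℂ))^2 * w1 + (Complex.I * (k2:ℂ))^2 * w1) -
          (ν:ℂ) * ((-lam / ((Real.sqrt (ε*ν) : ℝ):ℂ))^2 * w1) = 0 := by
        rw [hph]
        push_cast at hA1 hA2 hσ2 hD ⊢
        revert hσ hσ2
        generalize ((Real.sqrt (ε*ν) : ℝ):ℂ) = sg
        intro hσ hσ2
        field_simp [hD]
        linear_combination (-lam^2 * w2 + (ε:ℂ) * (ν:ℂ) * (k2:ℂ)^2 * w2 + (ε:ℂ) * (ν:ℂ) * (k1:ℂ)^2 * w2 + Complex.I * (μ:ℂ) * lam^2 * w1 - Complex.I * (μ:ℂ) * (ε:ℂ) * (ν:ℂ) * (k2:ℂ)^2 * w1 - Complex.I * (μ:ℂ) * (ε:ℂ) * (ν:ℂ) * (k1:ℂ)^2 * w1 - Complex.I^2 * (ε:ℂ) * (k2:ℂ)^2 * lam^2 * w1 - Complex.I^2 * (ε:ℂ) * (k1:ℂ)^2 * lam^2 * w1 - Complex.I^2 * (ε:ℂ) * (ν:ℂ) * (k1:ℂ) * (k2:ℂ) * w1 + Complex.I^2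 * (ε:ℂ) * (ν:ℂ) * (k1:ℂ)^2 * w2 + Complex.I^2 * (ε:ℂ)^2 * (ν:ℂ) * (k2:ℂ)^4 * w1 + (2) * Complex.I^2 * (ε:ℂ)^2 * (ν:ℂ) * (k1:ℂ)^2 * (k2:ℂ)^2 * w1 + Complex.I^2 * (ε:ℂ)^2 * (ν:ℂ) * (k1:ℂ)^4 * w1) * hσ2 + ((ε:ℂ) * (ν:ℂ)) * hA1 + (-(ε:ℂ)^2 * (ν:ℂ) * (k2:ℂ)^2 * lam^2 * w1 - (ε:ℂ)^2 * (ν:ℂ) * (k1:ℂ)^2 * lam^2 * w1 - (ε:ℂ)^2 * (ν:ℂ)^2 * (k1:ℂ) * (k2:ℂ) * w1 + (ε:ℂ)^2 * (ν:ℂ)^2 * (k1:ℂ)^2 * w2 + (ε:ℂ)^3 * (ν:ℂ)^2 * (k2:ℂ)^4 * w1 + (2) * (ε:ℂ)^3 * (ν:ℂ)^2 * (k1:ℂ)^2 * (k2:ℂ)^2 * w1 + (ε:ℂ)^3 * (ν:ℂ)^2 * (k1:ℂ)^4 * w1) * Complex.I_sq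
      linear_combination (BLE ε ν μ k1 k2 lam t x1 x2 z) * key
    · simp only [Wbl1, Wbl2]
      rw [deriv_cBLE_t, deriv_cBLE_x2, deriv2_cBLE_x1, deriv2_cBLE_x2, deriv2_cBLE_z]
      have key : (Complex.I * (μ:ℂ) / (ε:ℂ)) * w2 + ((1 / ε : ℝ) : ℂ) * w1 +
          (Complex.I * (k2:ℂ)) * ph -
          ((Complex.I * (k1:ℂ))^2 * w2 + (Complex.I * (k2:ℂ))^2 * w2) -
          (ν:ℂ) * ((-lam / ((Real.sqrt (ε*ν) : ℝ):ℂ))^2 * w2) = 0 := by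
        rw [hph]
        push_cast at hA1 hA2 hσ2 hD ⊢
        revert hσ hσ2
        generalize ((Real.sqrt (ε*ν) : ℝ):ℂ) = sg
        intro hσ hσ2
        field_simp [hD]
        linear_combination (lam^2 * w1 - (ε:ℂ) * (ν:ℂ) * (k2:ℂ)^2 * w1 - (ε:ℂ) * (ν:ℂ) * (k1:ℂ)^2 * w1 + Complex.I * (μ:ℂ) * lam^2 * w2 - Complex.I * (μ:ℂ) * (ε:ℂ) * (ν:ℂ) * (k2:ℂ)^2 * w2 - Complex.I * (μ:ℂ) * (ε:ℂ) * (ν:ℂ) * (k1:ℂ)^2 * w2 - Complex.I^2 * (ε:ℂ) * (k2:ℂ)^2 * lam^2 * w2 - Complex.I^2 * (ε:ℂ) * (k1:ℂ)^2 * lam^2 * w2 - Complex.I^2 * (ε:ℂ) * (ν:ℂ) * (k2:ℂ)^2 * w1 + Complex.I^2 * (ε:ℂ) * (ν:ℂ) * (k1:ℂ) * (k2:ℂ) * w2 + Complex.I^2 * (ε:ℂ)^2 * (ν:ℂ) * (k2:ℂ)^4 * w2 + (2) * Complex.I^2 * (ε:ℂ)^2 * (ν:ℂ) * (k1:ℂ)^2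 * (k2:ℂ)^2 * w2 + Complex.I^2 * (ε:ℂ)^2 * (ν:ℂ) * (k1:ℂ)^4 * w2) * hσ2 + ((ε:ℂ) * (ν:ℂ)) * hA2 + (-(ε:ℂ)^2 * (ν:ℂ) * (k2:ℂ)^2 * lam^2 * w2 - (ε:ℂ)^2 * (ν:ℂ) * (k1:ℂ)^2 * lam^2 * w2 - (ε:ℂ)^2 * (ν:ℂ)^2 * (k2:ℂ)^2 * w1 + (ε:ℂ)^2 * (ν:ℂ)^2 * (k1:ℂ) * (k2:ℂ) * w2 + (ε:ℂ)^3 * (ν:ℂ)^2 * (k2:ℂ)^4 * w2 + (2) * (ε:ℂ)^3 * (ν:ℂ)^2 * (k1:ℂ)^2 * (k2:ℂ)^2 * w2 + (ε:ℂ)^3 * (ν:ℂ)^2 * (k1:ℂ)^4 * w2) * Complex.I_sq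
      linear_combination (BLE ε ν μ k1 k2 lam t x1 x2 z) * key
    · simp only [Wbl3]
      rw [deriv_cBLE_t, deriv_cBLE_z, deriv2_cBLE_x1, deriv2_cBLE_x2, deriv2_cBLE_z]
      have key : (Complex.I * (μ:ℂ) / (ε:ℂ)) *
            ((((Real.sqrt (ε * ν) : ℝ) : ℂ) / lam) * Complex.I *
              ((k1 : ℂ) * w1 + (k2 : ℂ) * w2)) +
          (-lam / ((Real.sqrt (ε*ν) : ℝ):ℂ)) * ph -
          ((Complex.I * (k1:ℂ))^2 * ((((Real.sqrt (ε * ν) : ℝ) : ℂ) / lam) * Complex.I *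
              ((k1 : ℂ) * w1 + (k2 : ℂ) * w2)) +
           (Complex.I * (k2:ℂ))^2 * ((((Real.sqrt (ε * ν) : ℝ) : ℂ) / lam) * Complex.I *
              ((k1 : ℂ) * w1 + (k2 : ℂ) * w2))) -
          (ν:ℂ) * ((-lam / ((Real.sqrt (ε*ν) : ℝ):ℂ))^2 *
            ((((Real.sqrt (ε * ν) : ℝ) : ℂ) / lam) * Complex.I *
              ((k1 : ℂ) * w1 + (k2 : ℂ) * w2))) = 0 := by
        rw [hph]
        push_cast at hA1 hA2 hσ2 hD ⊢
        revert hσ hσ2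
        generalize ((Real.sqrt (ε*ν) : ℝ):ℂ) = sg
        intro hσ hσ2
        field_simp [hD]
        linear_combination (Complex.I * (Complex.I*(μ:ℂ)*((k1:ℂ)*w1+(k2:ℂ)*w2)*(lam^2 - (ε:ℂ)*(ν:ℂ)*((k1:ℂ)^2+(k2:ℂ)^2)) - Complex.I^2*(ε:ℂ)*((k1:ℂ)*w1+(k2:ℂ)*w2)*((k1:ℂ)^2+(k2:ℂ)^2)*(lam^2 - (ε:ℂ)*(ν:ℂ)*((k1:ℂ)^2+(k2:ℂ)^2)))) * hσ2 + (Complex.I*(ε:ℂ)*(ν:ℂ)*(k1:ℂ)) * hA1 + (Complex.I*(ε:ℂ)*(ν:ℂ)*(k2:ℂ)) * hA2 - (Complex.I*(ε:ℂ)*(ν:ℂ)*(ε:ℂ)*((k1:ℂ)*w1+(k2:ℂ)*w2)*((k1:ℂ)^2+(k2:ℂ)^2)*(lam^2 - (ε:ℂ)*(ν:ℂ)*((k1:ℂ)^2+(k2:ℂ)^2))) * Complex.I_sq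
      linear_combination (BLE ε ν μ k1 k2 lam t x1 x2 z) * key
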